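/- Let d ≥ 1 and let c^2, c^3, c^4 ∈ ℂ[t] be polynomials of degree d such that the product c^2·c^3·c^4 has 3d pairwise distinct roots (equivalently, each c^i has d simple roots and the three polynomials are pairwise coprime). Then there exist t_1, t_2 ∈ ℂ such that the 3×3 determinant det [[1, 1, 1], [c^2(t_1)^5, c^3(t_1)^5, c^4(t_1)^5], [c^2(t_2)^5, c^3(t_2)^5, c^4(t_2)^5]] is nonzero. -/

import Mathlib

open Polynomial UniqueFactorizationMonoid

/-- non-vanishing of `Jac(f_Fe, c)` for the Fermat quintic.
Let `c², c³, c⁴ ∈ ℂ[t]` have degree `d` and suppose the product `c²·c³·c⁴` has `3d`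
pairwise distinct roots.  Then there exist `t₁, t₂ ∈ ℂ` such that the determinant
`det [[1,1,1],[c²(t₁)⁵, c³(t₁)⁵, c⁴(t₁)⁵],[c²(t₂)⁵, c³(t₂)⁵, c⁴(t₂)⁵]]` is nonzero. -/

lemma pow5_ne {p q : Polynomial ℂ} (hp : p.natDegree ≠ 0) (hc : IsCoprime p q) :
    p ^ 5 ≠ q ^ 5 := by
  intro h
  have hdvd : p ∣ q ^ 5 := h ▸ dvd_pow_self p (by norm_num)
  have : IsUnit p := (hc.pow_right (n := 5)).isUnit_of_dvd' dvd_rfl hdvd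
  obtain ⟨r, -, hr⟩ := Polynomial.isUnit_iff.mp this
  exact hp (by rw [← hr, natDegree_C])

lemma coprime_of_roots {d : ℕ} (hd : 1 ≤ d) {p q r : Polynomial ℂ}
    (hp : p.natDegree = d) (hq : q.natDegree = d) (hr : r.natDegree = d)
    (β : Fin (3 * d) → ℂ) (hβinj : Function.Injective β)
    (hβroot : ∀ i, (p * q * r).eval (β i) = 0) :
    IsCoprime p q := by
  classical
  have hp0 : p ≠ 0 := fun h => by simp [h] at hp; omega
  have hq0 : q ≠ 0 := fun h => by simp [h] at hq; omega
  have hr0 : r ≠ 0 := fun h => by simp [h] at hr; omega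
  have hP0 : p * q * r ≠ 0 := mul_ne_zero (mul_ne_zero hp0 hq0) hr0
  have hPdeg : (p * q * r).natDegree = 3 * d := by
    rw [natDegree_mul (mul_ne_zero hp0 hq0) hr0, natDegree_mul hp0 hq0, hp, hq, hr]; ring
  set S : Finset ℂ := Finset.univ.image β with hS
  have hScard : S.card = 3 * d := by
    rw [hS, Finset.card_image_of_injective _ hβinj, Finset.card_univ, Fintype.card_fin]
  have hle : S.val ≤ (p * q * r).roots := by
    rw [Multiset.le_iff_count]
    intro a
    by_cases ha : a ∈ S
    · obtain ⟨i, -, rfl⟩ := Finset.mem_image.mp ha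
      have h1 : S.val.count (β i) = 1 :=
        Multiset.count_eq_one_of_mem S.nodup ha
      rw [h1, Multiset.one_le_count_iff_mem, mem_roots hP0]
      exact hβroot i
    · simp [Multiset.count_eq_zero_of_notMem (show a ∉ S.val from ha)]
  have hcard : Multiset.card (p * q * r).roots ≤ 3 * d := hPdeg ▸ card_roots' _
  have heq : (p * q * r).roots = S.val :=
    (Multiset.eq_of_le_of_card_le hle (by rw [Finset.card_def] at hScard; omega)).symm
  have hnodup : (p * q * r).roots.Nodup := heq ▸ S.nodup
  rw [isCoprime_iff_aeval_ne_zero_of_isAlgClosed ℂ ℂ]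
  intro a
  by_contra hcon
  push_neg at hcon
  obtain ⟨ha1, ha2⟩ := hcon
  simp only [aeval_def, eval₂_eq_eval_map, Polynomial.map_id, map_id] at ha1 ha2
  have ha1' : p.eval a = 0 := by simpa using ha1
  have ha2' : q.eval a = 0 := by simpa using ha2
  have h2 : 2 ≤ rootMultiplicity a (p * q * r) := by
    rw [rootMultiplicity_mul hP0, rootMultiplicity_mul (mul_ne_zero hp0 hq0)]
    have u1 : 0 < rootMultiplicity a p := (rootMultiplicity_pos hp0).mpr ha1'
    have u2 : 0 < rootMultiplicity a q := (rootMultiplicity_pos hq0).mpr ha2'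
    omega
  have h1 : (p * q * r).roots.count a ≤ 1 := Multiset.nodup_iff_count_le_one.mp hnodup a
  rw [count_roots] at h1
  omega

theorem stmt7 (d : ℕ) (hd : 1 ≤ d) (c₂ c₃ c₄ : Polynomial ℂ)
    (h₂ : c₂.natDegree = d) (h₃ : c₃.natDegree = d) (h₄ : c₄.natDegree = d)
    (β : Fin (3 * d) → ℂ) (hβinj : Function.Injective β)
    (hβroot : ∀ i, (c₂ * c₃ * c₄).eval (β i) = 0) :
    ∃ t₁ t₂ : ℂ,
      Matrix.det
        !![(1 : ℂ), 1, 1;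
           (c₂.eval t₁) ^ 5, (c₃.eval t₁) ^ 5, (c₄.eval t₁) ^ 5;
           (c₂.eval t₂) ^ 5, (c₃.eval t₂) ^ 5, (c₄.eval t₂) ^ 5] ≠ 0 := by
  classical
  have hc₂0 : c₂ ≠ 0 := fun h => by simp [h] at h₂; omega
  have hc₃0 : c₃ ≠ 0 := fun h => by simp [h] at h₃; omega
  have hc₄0 : c₄ ≠ 0 := fun h => by simp [h] at h₄; omega
  have hcop23 : IsCoprime c₂ c₃ := coprime_of_roots hd h₂ h₃ h₄ β hβinj hβroot
  have hcop24 : IsCoprime c₂ c₄ := by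
    refine coprime_of_roots hd h₂ h₄ h₃ β hβinj fun i => ?_
    have := hβroot i; rw [show c₂ * c₄ * c₃ = c₂ * c₃ * c₄ by ring]; exact this
  have hcop34 : IsCoprime c₃ c₄ := by
    refine coprime_of_roots hd h₃ h₄ h₂ β hβinj fun i => ?_
    have := hβroot i; rw [show c₃ * c₄ * c₂ = c₂ * c₃ * c₄ by ring]; exact this
  by_contra hcon
  push_neg at hcon
  set A : Polynomial ℂ := c₃ ^ 5 - c₂ ^ 5 with hAdef
  set B : Polynomial ℂ := c₄ ^ 5 - c₂ ^ 5 with hBdef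
  have key : ∀ s t : ℂ, A.eval s * B.eval t - B.eval s * A.eval t = 0 := by
    intro s t
    have h0 := hcon s t
    simp [Matrix.det_fin_three] at h0
    simp only [hAdef, hBdef, eval_sub, eval_pow]
    linear_combination h0
  -- B ≠ 0
  have hB0 : B ≠ 0 := by
    intro h
    rw [hBdef, sub_eq_zero] at h
    exact pow5_ne (by rw [h₄]; omega) hcop24.symm h
  have : ∃ s₀ : ℂ, B.eval s₀ ≠ 0 := by
    by_contra h
    push_neg at h
    exact hB0 (Polynomial.funext fun r => by simp [h r])
  obtain ⟨s₀, hs₀⟩ := this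
  set lam : ℂ := A.eval s₀ / B.eval s₀ with hlam
  have hA : A = C lam * B := by
    apply Polynomial.funext
    intro t
    have h0 := key s₀ t
    rw [eval_mul, eval_C, hlam]
    field_simp
    linear_combination -h0
  have hlam0 : lam ≠ 0 := by
    intro h
    rw [h, map_zero, zero_mul] at hA
    have : c₃ ^ 5 = c₂ ^ 5 := sub_eq_zero.mp (hAdef ▸ hA)
    exact pow5_ne (by rw [h₃]; omega) hcop23.symm this
  have hlam1 : lam ≠ 1 := by
    intro h
    rw [h, map_one, one_mul] at hA
    have : c₃ ^ 5 = c₄ ^ 5 := by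
      have := hA; rw [hAdef, hBdef] at this
      linear_combination this
    exact pow5_ne (by rw [h₃]; omega) hcop34 this
  -- Mason–Stothers setup
  set a : Polynomial ℂ := C (1 - lam) * c₂ ^ 5 with hadef
  set b : Polynomial ℂ := C lam * c₄ ^ 5 with hbdef
  set cc : Polynomial ℂ := -(c₃ ^ 5) with hccdef
  have h1lam : (1 : ℂ) - lam ≠ 0 := sub_ne_zero.mpr (Ne.symm hlam1)
  have ha0 : a ≠ 0 := mul_ne_zero (C_ne_zero.mpr h1lam) (pow_ne_zero _ hc₂0)
  have hb0 : b ≠ 0 := mul_ne_zero (C_ne_zero.mpr hlam0) (pow_ne_zero _ hc₄0)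
  have hcc0 : cc ≠ 0 := neg_ne_zero.mpr (pow_ne_zero _ hc₃0)
  have hsum : a + b + cc = 0 := by
    rw [hadef, hbdef, hccdef, map_sub, map_one]
    have := hA; rw [hAdef, hBdef] at this
    linear_combination -this
  have hu1 : IsUnit (C (1 - lam) : Polynomial ℂ) := Polynomial.isUnit_C.mpr h1lam.isUnit
  have hu2 : IsUnit (C lam : Polynomial ℂ) := Polynomial.isUnit_C.mpr hlam0.isUnit
  have hab : IsCoprime a b := by
    rw [hadef, hbdef]
    exact (isCoprime_mul_unit_left_left hu1 _ _).mpr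
      ((isCoprime_mul_unit_left_right hu2 _ _).mpr (hcop24.pow))
  have hbc : IsCoprime b cc := by
    rw [hbdef, hccdef]
    exact IsCoprime.neg_right ((isCoprime_mul_unit_left_left hu2 _ _).mpr (hcop34.symm.pow))
  have hca : IsCoprime cc a := by
    rw [hadef, hccdef]
    exact IsCoprime.neg_left ((isCoprime_mul_unit_left_right hu1 _ _).mpr (hcop23.symm.pow))
  have habc := Polynomial.abc ha0 hb0 hcc0 hab hsum
  have hdegcc : cc.natDegree = 5 * d := by
    rw [hccdef, natDegree_neg, natDegree_pow, h₃]
  rcases habc with ⟨-, -, hle⟩ | ⟨-, -, hder⟩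
  · -- degree contradiction
    have hprod : a * b * cc = C (-((1 - lam) * lam)) * (c₂ * c₃ * c₄) ^ 5 := by
      rw [hadef, hbdef, hccdef]
      simp only [map_neg, map_mul]
      ring
    have hu3 : IsUnit (C (-((1 - lam) * lam)) : Polynomial ℂ) :=
      Polynomial.isUnit_C.mpr (by simp [h1lam, hlam0] : (-((1 - lam) * lam) : ℂ) ≠ 0).isUnit
    obtain ⟨u, hu⟩ := hu3
    have hrad : radical (a * b * cc) = radical (c₂ * c₃ * c₄) := by
      rw [hprod, ← hu, radical_mul_of_isUnit_left u.isUnit, radical_pow _ (by norm_num : 5 ≠ 0)]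
    have hP0 : c₂ * c₃ * c₄ ≠ 0 := mul_ne_zero (mul_ne_zero hc₂0 hc₃0) hc₄0
    have hPdeg : (c₂ * c₃ * c₄).natDegree = 3 * d := by
      rw [natDegree_mul (mul_ne_zero hc₂0 hc₃0) hc₄0, natDegree_mul hc₂0 hc₃0, h₂, h₃, h₄]; ring
    have hraddeg : (radical (a * b * cc)).natDegree ≤ 3 * d := by
      rw [hrad, ← hPdeg]
      exact natDegree_le_of_dvd radical_dvd_self hP0
    rw [hdegcc] at hle
    omega
  · -- derivative contradiction
    have : cc.natDegree = 0 := natDegree_eq_zero_of_derivative_eq_zero hder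
    omega
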